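/- Let H be a complex separable Hilbert space, K a bounded linear operator on H with closed range R(K), and P the orthogonal projection of H onto R(K). Let (f_k)_{k∈I} and (g_k)_{k∈I} be Bessel sequences in H with synthesis operators T_F and T_G. If ‖K − P T_F T_G*‖ < 1 (i.e. (g_k) is an approximate K-dual of (P f_k)) and ‖(I − P) T_F T_G*‖ < 1 − ‖K − P T_F T_G*‖, then ‖K − T_F T_G*‖ < 1, i.e. (g_k) is an approximate K-dual of (f_k). -/

import Mathlib

open ContinuousLinearMap

/-- Theorem 4.5: if `(g k)` is an approximate `K`-dual of `(P f_k)`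
(`‖K − P T_F T_G*‖ < 1`) and `‖(I − P) T_F T_G*‖ < 1 − ‖K − P T_F T_G*‖`, then
`‖K − T_F T_G*‖ < 1`, i.e. `(g k)` is an approximate `K`-dual of `(f k)`. -/
theorem approximate_K_dual_of_projected_is_approximate_dual
    {H : Type*} [NormedAddCommGroup H] [InnerProductSpace ℂ H]
    [CompleteSpace H] [TopologicalSpace.SeparableSpace H]
    {I : Type*} [Countable I] [DecidableEq I]
    (K P : H →L[ℂ] H) (f g : I → H)
    (TF TG : lp (fun _ : I => ℂ) 2 →L[ℂ] H)
    (hTF : ∀ k, TF (lp.single 2 k 1) = f k)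
    (hTG : ∀ k, TG (lp.single 2 k 1) = g k)
    (hK : IsClosed (Set.range ⇑K))
    (hPmem : ∀ x : H, P x ∈ Set.range ⇑K)
    (hPfix : ∀ y ∈ Set.range ⇑K, P y = y)
    (hPsa : adjoint P = P)
    (hf : ∃ B : ℝ, 0 < B ∧ ∀ x : H, Summable (fun k => ‖(inner ℂ (f k) x : ℂ)‖ ^ 2) ∧
      ∑' k, ‖(inner ℂ (f k) x : ℂ)‖ ^ 2 ≤ B * ‖x‖ ^ 2)
    (hg : ∃ D : ℝ, 0 < D ∧ ∀ x : H, Summable (fun k => ‖(inner ℂ (g k) x : ℂ)‖ ^ 2) ∧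
      ∑' k, ‖(inner ℂ (g k) x : ℂ)‖ ^ 2 ≤ D * ‖x‖ ^ 2)
    (happrox : ‖K - P.comp (TF.comp (adjoint TG))‖ < 1)
    (hcompl : ‖(ContinuousLinearMap.id ℂ H - P).comp (TF.comp (adjoint TG))‖ <
      1 - ‖K - P.comp (TF.comp (adjoint TG))‖) :
    ‖K - TF.comp (adjoint TG)‖ < 1 := by
  have hdecomp : K - TF.comp (adjoint TG) =
      (K - P.comp (TF.comp (adjoint TG))) -
        (ContinuousLinearMap.id ℂ H - P).comp (TF.comp (adjoint TG)) := by
    ext x; simp [sub_comp, sub_apply]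
  calc ‖K - TF.comp (adjoint TG)‖
      ≤ ‖K - P.comp (TF.comp (adjoint TG))‖ +
        ‖(ContinuousLinearMap.id ℂ H - P).comp (TF.comp (adjoint TG))‖ := by
        rw [hdecomp]; exact norm_sub_le _ _
    _ < 1 := by linarith
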